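/- With the scheme setup below, viewing all matrices over ℤ: A₃ * A₃ = (n * (v - k)) • (Σ_{j ∈ ZMod n} A₀ⱼ) + (n * (v - 2k + λ)) • A₁, where the scalar coefficients v - k and v - 2k + λ are computed in ℤ. Moreover A₂ᵢ * A₃ = A₃ * A₂ᵢ = (k - λ) • A₁ for every i ∈ ZMod n. -/

import Mathlib

open Matrix Kronecker

/-- The all-ones matrix. -/
def Jmat (m : Type*) : Matrix m m ℤ := Matrix.of fun _ _ => 1

/-- The cyclic permutation matrix `P` of order `n`, with `P a b = 1` iff `b = a + 1`. -/
def Pmat (n : ℕ) : Matrix (ZMod n) (ZMod n) ℤ := Matrix.of fun a b => if b = a + 1 then 1 else 0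

/-- The power `P^i` for `i ∈ ZMod n` (well defined since `Pⁿ = I`). -/
def Ppow (n : ℕ) [NeZero n] (i : ZMod n) : Matrix (ZMod n) (ZMod n) ℤ := Pmat n ^ i.val

/-- The adjacency matrices `A₀ᵢ = blockDiagonal (Pⁱ ⊗ I_v, Pⁱ ⊗ I_v)`. -/
def A0 (n v : ℕ) [NeZero n] (i : ZMod n) :
    Matrix ((ZMod n × Fin v) ⊕ (ZMod n × Fin v)) ((ZMod n × Fin v) ⊕ (ZMod n × Fin v)) ℤ :=
  Matrix.fromBlocks (Ppow n i ⊗ₖ 1) 0 0 (Ppow n i ⊗ₖ 1)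

/-- The adjacency matrix `A₁ = blockDiagonal (J_n ⊗ (J_v - I_v), J_n ⊗ (J_v - I_v))`. -/
def A1 (n v : ℕ) :
    Matrix ((ZMod n × Fin v) ⊕ (ZMod n × Fin v)) ((ZMod n × Fin v) ⊕ (ZMod n × Fin v)) ℤ :=
  Matrix.fromBlocks (Jmat (ZMod n) ⊗ₖ (Jmat (Fin v) - 1)) 0 0
    (Jmat (ZMod n) ⊗ₖ (Jmat (Fin v) - 1))

/-- The adjacency matrices `A₂ᵢ`, with zero diagonal blocks, upper-right block
`Σ_j Pʲ ⊗ B(i+j)` and lower-left block `Σ_j Pʲ ⊗ (B(-i-j))ᵀ`. -/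
def A2 (n v : ℕ) [NeZero n] (B : ZMod n → Matrix (Fin v) (Fin v) ℤ) (i : ZMod n) :
    Matrix ((ZMod n × Fin v) ⊕ (ZMod n × Fin v)) ((ZMod n × Fin v) ⊕ (ZMod n × Fin v)) ℤ :=
  Matrix.fromBlocks 0 (∑ j : ZMod n, Ppow n j ⊗ₖ B (i + j))
    (∑ j : ZMod n, Ppow n j ⊗ₖ (B (-i - j))ᵀ) 0

/-- The adjacency matrix `A₃`, with zero diagonal blocks, upper-right block
`J_n ⊗ (J_v - Σ_j B j)` and lower-left block `J_n ⊗ (J_v - Σ_j (B j)ᵀ)`. -/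
def A3 (n v : ℕ) [NeZero n] (B : ZMod n → Matrix (Fin v) (Fin v) ℤ) :
    Matrix ((ZMod n × Fin v) ⊕ (ZMod n × Fin v)) ((ZMod n × Fin v) ⊕ (ZMod n × Fin v)) ℤ :=
  Matrix.fromBlocks 0 (Jmat (ZMod n) ⊗ₖ (Jmat (Fin v) - ∑ j : ZMod n, B j))
    (Jmat (ZMod n) ⊗ₖ (Jmat (Fin v) - ∑ j : ZMod n, (B j)ᵀ)) 0


lemma JJ (m : Type*) [Fintype m] [DecidableEq m] :
    Jmat m * Jmat m = (Fintype.card m : ℤ) • Jmat m := by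
  ext x y; simp [Jmat, Matrix.mul_apply]

lemma Pmat_pow (n : ℕ) [NeZero n] (m : ℕ) :
    (Pmat n) ^ m = Matrix.of fun a b => if b = a + (m : ZMod n) then 1 else 0 := by
  induction m with
  | zero => ext a b; simp [Matrix.one_apply, eq_comm]
  | succ m ih =>
    rw [pow_succ, ih]; ext a b
    simp only [Matrix.mul_apply, Matrix.of_apply, Pmat, ite_mul, one_mul, zero_mul]
    rw [Finset.sum_ite_eq' Finset.univ (a + (m : ZMod n))]
    simp only [Finset.mem_univ, if_true]
    push_cast
    rw [add_assoc]

lemma Ppow_apply (n : ℕ) [NeZero n] (i : ZMod n) (a b : ZMod n) :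
    Ppow n i a b = if b = a + i then 1 else 0 := by
  rw [Ppow, Pmat_pow]; simp [ZMod.natCast_val, ZMod.cast_id]

lemma sum_Ppow (n : ℕ) [NeZero n] : ∑ j : ZMod n, Ppow n j = Jmat (ZMod n) := by
  ext a b
  rw [Matrix.sum_apply]
  simp only [Ppow_apply]
  have : ∀ j : ZMod n, (b = a + j) ↔ (j = b - a) := by
    intro j; constructor <;> intro h <;> [rw [h]; rw [h]] <;> ring
  simp_rw [this]
  simp [Jmat]

lemma Ppow_mul_J (n : ℕ) [NeZero n] (j : ZMod n) :
    Ppow n j * Jmat (ZMod n) = Jmat (ZMod n) := by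
  ext a b
  simp only [Matrix.mul_apply, Ppow_apply, Jmat, Matrix.of_apply, ite_mul, one_mul, zero_mul]
  simp [Finset.sum_ite_eq' Finset.univ (a + j)]

lemma J_mul_Ppow (n : ℕ) [NeZero n] (j : ZMod n) :
    Jmat (ZMod n) * Ppow n j = Jmat (ZMod n) := by
  ext a b
  simp only [Matrix.mul_apply, Ppow_apply, Jmat, Matrix.of_apply, mul_ite, mul_one, mul_zero]
  have : ∀ c : ZMod n, (b = c + j) ↔ (c = b - j) := by
    intro c; constructor <;> intro h <;> [rw [h]; rw [h]] <;> ring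
  simp_rw [this]
  simp

lemma sum_kron {ι : Type*} (s : Finset ι) {l m p q : Type*}
    (A : ι → Matrix l m ℤ) (C : Matrix p q ℤ) :
    (∑ i ∈ s, A i) ⊗ₖ C = ∑ i ∈ s, (A i) ⊗ₖ C := by
  ext ⟨a, b⟩ ⟨c, d⟩
  rw [Matrix.sum_apply]
  simp only [Matrix.kroneckerMap_apply]
  rw [Matrix.sum_apply, Finset.sum_mul]

lemma kron_smul_left {l m p q : Type*} (r : ℤ) (A : Matrix l m ℤ) (C : Matrix p q ℤ) :
    (r • A) ⊗ₖ C = r • (A ⊗ₖ C) := Matrix.smul_kronecker r A C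

lemma kron_smul_right {l m p q : Type*} (r : ℤ) (A : Matrix l m ℤ) (C : Matrix p q ℤ) :
    A ⊗ₖ (r • C) = r • (A ⊗ₖ C) := Matrix.kronecker_smul r A C

lemma kron_add {l m p q : Type*} (A : Matrix l m ℤ) (C D : Matrix p q ℤ) :
    A ⊗ₖ (C + D) = A ⊗ₖ C + A ⊗ₖ D := Matrix.kronecker_add A C D

lemma kron_sum_right {ι : Type*} (s : Finset ι) {l m p q : Type*}
    (A : Matrix l m ℤ) (C : ι → Matrix p q ℤ) :
    A ⊗ₖ (∑ i ∈ s, C i) = ∑ i ∈ s, A ⊗ₖ (C i) := by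
  ext ⟨a, b⟩ ⟨c, d⟩
  rw [Matrix.sum_apply]
  simp only [Matrix.kroneckerMap_apply]
  rw [Matrix.sum_apply, Finset.mul_sum]

lemma sum_fromBlocks {ι : Type*} (s : Finset ι) {n m : Type*}
    (f : ι → Matrix n n ℤ) (g : ι → Matrix m m ℤ) :
    ∑ i ∈ s, Matrix.fromBlocks (f i) 0 0 (g i) =
      Matrix.fromBlocks (∑ i ∈ s, f i) 0 0 (∑ i ∈ s, g i) := by
  ext (a | a) (b | b) <;>
    rw [Matrix.sum_apply] <;>
    simp [Matrix.fromBlocks, Matrix.sum_apply]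

lemma split_sum {v n : ℕ} (k μ : ℕ) [NeZero n] (f : ZMod n → ZMod n → Matrix (Fin v) (Fin v) ℤ)
    (h0 : ∑ g : ZMod n, f g 0 = (k:ℤ) • 1 + (μ:ℤ) • (Jmat (Fin v) - 1))
    (hne : ∀ h : ZMod n, h ≠ 0 → ∑ g : ZMod n, f g h = (μ:ℤ) • (Jmat (Fin v) - 1)) :
    ∑ g : ZMod n, ∑ h : ZMod n, f g h
      = (k:ℤ) • 1 + ((n*μ:ℕ):ℤ) • (Jmat (Fin v) - 1) := by
  rw [Finset.sum_comm]
  rw [← Finset.add_sum_erase _ _ (Finset.mem_univ (0 : ZMod n))]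
  rw [h0]
  have he : ∑ h ∈ Finset.univ.erase (0 : ZMod n), ∑ g : ZMod n, f g h
      = (n - 1) • ((μ:ℤ) • (Jmat (Fin v) - 1)) := by
    rw [Finset.sum_congr rfl (fun h hh => hne h (Finset.ne_of_mem_erase hh)), Finset.sum_const,
      Finset.card_erase_of_mem (Finset.mem_univ _), Finset.card_univ, ZMod.card]
  rw [he]
  have hn : (1:ℕ) ≤ n := Nat.one_le_iff_ne_zero.2 (NeZero.ne n)
  have hcast : ((n - 1 : ℕ) : ℤ) = (n:ℤ) - 1 := by omega
  rw [← Nat.cast_smul_eq_nsmul ℤ, smul_smul, add_assoc, ← add_smul, hcast]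
  congr 2
  push_cast
  ring

/-- `A₃ A₃ = n(v-k) • Σⱼ A₀ⱼ + n(v - 2k + λ) • A₁` (with `λ = nμ` and coefficients in
`ℤ`), and `A₂ᵢ A₃ = A₃ A₂ᵢ = (k - λ) • A₁`. -/
theorem stmt_16 (v k n μ : ℕ) [NeZero n]
    (B : ZMod n → Matrix (Fin v) (Fin v) ℤ)
    (hB01 : ∀ g i j, B g i j = 0 ∨ B g i j = 1)
    (hdisj : ∀ i j (g g' : ZMod n), B g i j = 1 → B g' i j = 1 → g = g')
    (h1 : ∑ g : ZMod n, B g * (B g)ᵀ = (k : ℤ) • 1 + (μ : ℤ) • (Jmat (Fin v) - 1))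
    (h1' : ∑ g : ZMod n, (B g)ᵀ * B g = (k : ℤ) • 1 + (μ : ℤ) • (Jmat (Fin v) - 1))
    (h2 : ∀ h : ZMod n, h ≠ 0 →
      ∑ g : ZMod n, B g * (B (g - h))ᵀ = (μ : ℤ) • (Jmat (Fin v) - 1))
    (h2' : ∀ h : ZMod n, h ≠ 0 →
      ∑ g : ZMod n, (B (g - h))ᵀ * B g = (μ : ℤ) • (Jmat (Fin v) - 1)) :
    (A3 n v B * A3 n v B =
      ((n : ℤ) * ((v : ℤ) - (k : ℤ))) • (∑ j : ZMod n, A0 n v j) +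
      ((n : ℤ) * ((v : ℤ) - 2 * (k : ℤ) + ((n * μ : ℕ) : ℤ))) • A1 n v) ∧
    (∀ i : ZMod n, A2 n v B i * A3 n v B = ((k : ℤ) - ((n * μ : ℕ) : ℤ)) • A1 n v ∧
      A3 n v B * A2 n v B i = ((k : ℤ) - ((n * μ : ℕ) : ℤ)) • A1 n v) := by
  classical
  set C : Matrix (Fin v) (Fin v) ℤ := ∑ j : ZMod n, B j with hCdef
  have hCt : (∑ j : ZMod n, (B j)ᵀ) = Cᵀ := by
    rw [hCdef, Matrix.transpose_sum]
  have hCC : C * Cᵀ = (k:ℤ) • 1 + ((n*μ:ℕ):ℤ) • (Jmat (Fin v) - 1) := by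
    have e : C * Cᵀ = ∑ g : ZMod n, ∑ h : ZMod n, B g * (B (g - h))ᵀ := by
      rw [hCdef, Matrix.transpose_sum, Matrix.sum_mul]
      refine Finset.sum_congr rfl fun g _ => ?_
      rw [Matrix.mul_sum]
      exact (Fintype.sum_equiv (Equiv.subLeft g) _ _ (fun h => rfl)).symm
    rw [e]
    exact split_sum k μ _ (by simpa using h1) h2
  have hCtC : Cᵀ * C = (k:ℤ) • 1 + ((n*μ:ℕ):ℤ) • (Jmat (Fin v) - 1) := by
    have e : Cᵀ * C = ∑ g : ZMod n, ∑ h : ZMod n, (B (g - h))ᵀ * B g := by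
      rw [hCdef, Matrix.transpose_sum, Matrix.mul_sum]
      refine Finset.sum_congr rfl fun g _ => ?_
      rw [Matrix.sum_mul]
      exact (Fintype.sum_equiv (Equiv.subLeft g) _ _ (fun h => rfl)).symm
    rw [e]
    exact split_sum k μ _ (by simpa using h1') h2'
  have hC01 : ∀ x y, C x y = 0 ∨ C x y = 1 := by
    intro x y
    have hxy : C x y = ∑ g : ZMod n, B g x y := by
      rw [hCdef]; simp [Matrix.sum_apply]
    by_cases hex : ∃ g, B g x y = 1
    · obtain ⟨g₀, hg₀⟩ := hex
      right
      rw [hxy, Finset.sum_eq_single g₀ (fun g _ hg => ?_) (fun h => absurd (Finset.mem_univ g₀) h)]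
      · exact hg₀
      · rcases hB01 g x y with h | h
        · exact h
        · exact absurd (hdisj x y g g₀ h hg₀) hg
    · left
      rw [hxy]
      refine Finset.sum_eq_zero fun g _ => ?_
      rcases hB01 g x y with h | h
      · exact h
      · exact absurd ⟨g, h⟩ hex
  have hsq : ∀ x y, C x y * C x y = C x y := fun x y => by
    rcases hC01 x y with h | h <;> simp [h]
  have hdiag : ∀ x : Fin v, ((k:ℤ) • (1:Matrix (Fin v) (Fin v) ℤ)
      + ((n*μ:ℕ):ℤ) • (Jmat (Fin v) - 1)) x x = (k:ℤ) := by
    intro x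
    simp only [Matrix.add_apply, Matrix.smul_apply, Matrix.sub_apply, Matrix.one_apply_eq,
      Jmat, Matrix.of_apply, smul_eq_mul]
    ring
  have hrow : ∀ x, ∑ z, C x z = (k:ℤ) := by
    intro x
    have h := congrFun (congrFun hCC x) x
    rw [Matrix.mul_apply] at h
    simp only [Matrix.transpose_apply] at h
    simp_rw [hsq] at h
    rw [hdiag x] at h
    exact h
  have hcol : ∀ y, ∑ z, C z y = (k:ℤ) := by
    intro y
    have h := congrFun (congrFun hCtC y) y
    rw [Matrix.mul_apply] at h
    simp only [Matrix.transpose_apply] at h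
    simp_rw [hsq] at h
    rw [hdiag y] at h
    exact h
  have hCJ : C * Jmat (Fin v) = (k:ℤ) • Jmat (Fin v) := by
    ext x y
    rw [Matrix.mul_apply]
    simp only [Jmat, Matrix.of_apply, mul_one, Matrix.smul_apply, smul_eq_mul]
    exact hrow x
  have hJC : Jmat (Fin v) * C = (k:ℤ) • Jmat (Fin v) := by
    ext x y
    rw [Matrix.mul_apply]
    simp only [Jmat, Matrix.of_apply, one_mul, mul_one, Matrix.smul_apply, smul_eq_mul]
    exact hcol y
  have hCtJ : Cᵀ * Jmat (Fin v) = (k:ℤ) • Jmat (Fin v) := by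
    ext x y
    rw [Matrix.mul_apply]
    simp only [Jmat, Matrix.of_apply, mul_one, Matrix.smul_apply, smul_eq_mul,
      Matrix.transpose_apply]
    exact hcol x
  have hJCt : Jmat (Fin v) * Cᵀ = (k:ℤ) • Jmat (Fin v) := by
    ext x y
    rw [Matrix.mul_apply]
    simp only [Jmat, Matrix.of_apply, one_mul, mul_one, Matrix.smul_apply, smul_eq_mul,
      Matrix.transpose_apply]
    exact hrow y
  have hJJv : Jmat (Fin v) * Jmat (Fin v) = (v:ℤ) • Jmat (Fin v) := by
    have h := JJ (Fin v); rwa [Fintype.card_fin] at h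
  have hJJn : Jmat (ZMod n) * Jmat (ZMod n) = (n:ℤ) • Jmat (ZMod n) := by
    have h := JJ (ZMod n); rwa [ZMod.card] at h
  have key1 : (Jmat (Fin v) - C) * (Jmat (Fin v) - Cᵀ)
      = ((v:ℤ) - (k:ℤ)) • (1 : Matrix (Fin v) (Fin v) ℤ)
        + ((v:ℤ) - 2*(k:ℤ) + ((n*μ:ℕ):ℤ)) • (Jmat (Fin v) - 1) := by
    rw [Matrix.sub_mul, Matrix.mul_sub, Matrix.mul_sub, hJJv, hJCt, hCJ, hCC]
    module
  have key1' : (Jmat (Fin v) - Cᵀ) * (Jmat (Fin v) - C)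
      = ((v:ℤ) - (k:ℤ)) • (1 : Matrix (Fin v) (Fin v) ℤ)
        + ((v:ℤ) - 2*(k:ℤ) + ((n*μ:ℕ):ℤ)) • (Jmat (Fin v) - 1) := by
    rw [Matrix.sub_mul, Matrix.mul_sub, Matrix.mul_sub, hJJv, hJC, hCtJ, hCtC]
    module
  have key2 : C * (Jmat (Fin v) - Cᵀ) = ((k:ℤ) - ((n*μ:ℕ):ℤ)) • (Jmat (Fin v) - 1) := by
    rw [Matrix.mul_sub, hCJ, hCC]; module
  have key2' : Cᵀ * (Jmat (Fin v) - C) = ((k:ℤ) - ((n*μ:ℕ):ℤ)) • (Jmat (Fin v) - 1) := by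
    rw [Matrix.mul_sub, hCtJ, hCtC]; module
  have key3 : (Jmat (Fin v) - C) * Cᵀ = ((k:ℤ) - ((n*μ:ℕ):ℤ)) • (Jmat (Fin v) - 1) := by
    rw [Matrix.sub_mul, hJCt, hCC]; module
  have key3' : (Jmat (Fin v) - Cᵀ) * C = ((k:ℤ) - ((n*μ:ℕ):ℤ)) • (Jmat (Fin v) - 1) := by
    rw [Matrix.sub_mul, hJC, hCtC]; module
  have hA3 : A3 n v B = Matrix.fromBlocks 0 (Jmat (ZMod n) ⊗ₖ (Jmat (Fin v) - C))
      (Jmat (ZMod n) ⊗ₖ (Jmat (Fin v) - Cᵀ)) 0 := by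
    rw [A3, hCt, ← hCdef]
  constructor
  · rw [hA3, Matrix.fromBlocks_multiply]
    have hsum0 : ∑ j : ZMod n, A0 n v j
        = Matrix.fromBlocks (Jmat (ZMod n) ⊗ₖ (1 : Matrix (Fin v) (Fin v) ℤ)) 0 0
          (Jmat (ZMod n) ⊗ₖ (1 : Matrix (Fin v) (Fin v) ℤ)) := by
      simp only [A0]
      rw [sum_fromBlocks, ← sum_kron, sum_Ppow]
    rw [hsum0, A1, Matrix.fromBlocks_smul, Matrix.fromBlocks_smul, Matrix.fromBlocks_add]
    simp only [Matrix.zero_mul, Matrix.mul_zero, add_zero, zero_add, smul_zero]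
    rw [Matrix.fromBlocks_inj]
    refine ⟨?_, rfl, rfl, ?_⟩
    · rw [← Matrix.mul_kronecker_mul, hJJn, key1, kron_smul_left, kron_add, kron_smul_right,
        kron_smul_right]
      module
    · rw [← Matrix.mul_kronecker_mul, hJJn, key1', kron_smul_left, kron_add, kron_smul_right,
        kron_smul_right]
      module
  · intro i
    have hsumB : ∑ j : ZMod n, B (i + j) = C := by
      rw [hCdef]
      exact Fintype.sum_equiv (Equiv.addLeft i) _ _ (fun j => rfl)
    have hsumBt : ∑ j : ZMod n, (B (-i - j))ᵀ = Cᵀ := by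
      rw [← hCt]
      exact Fintype.sum_equiv (Equiv.subLeft (-i)) _ _ (fun j => rfl)
    constructor
    · rw [A2, hA3, Matrix.fromBlocks_multiply, A1, Matrix.fromBlocks_smul]
      simp only [Matrix.zero_mul, Matrix.mul_zero, add_zero, zero_add, smul_zero]
      rw [Matrix.fromBlocks_inj]
      refine ⟨?_, rfl, rfl, ?_⟩
      · rw [Matrix.sum_mul]
        simp_rw [← Matrix.mul_kronecker_mul, Ppow_mul_J]
        rw [← kron_sum_right, ← Matrix.sum_mul, hsumB, key2, kron_smul_right]
      · rw [Matrix.sum_mul]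
        simp_rw [← Matrix.mul_kronecker_mul, Ppow_mul_J]
        rw [← kron_sum_right, ← Matrix.sum_mul, hsumBt, key2', kron_smul_right]
    · rw [A2, hA3, Matrix.fromBlocks_multiply, A1, Matrix.fromBlocks_smul]
      simp only [Matrix.zero_mul, Matrix.mul_zero, add_zero, zero_add, smul_zero]
      rw [Matrix.fromBlocks_inj]
      refine ⟨?_, rfl, rfl, ?_⟩
      · rw [Matrix.mul_sum]
        simp_rw [← Matrix.mul_kronecker_mul, J_mul_Ppow]
        rw [← kron_sum_right, ← Matrix.mul_sum, hsumBt, key3, kron_smul_right]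
      · rw [Matrix.mul_sum]
        simp_rw [← Matrix.mul_kronecker_mul, J_mul_Ppow]
        rw [← kron_sum_right, ← Matrix.mul_sum, hsumB, key3', kron_smul_right]
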